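/- Fix t > 0. Then, as ε → 0⁺, the integral I(ε) = (1/ε) ∫_{ℝ²} |1 − i t/(2|p|)| · (p₁⁴/(4|p|⁴)) · exp(−|p|²/(ε(1+ε))) dp satisfies: I(ε) = ε^{−1/2} ∫₀^∞ ∫₀^{2π} |√ε r − i t/2| (cos⁴θ / 4) exp(−r²/(1+ε)) dr dθ, and consequently there exist constants c, C > 0 and ε₀ > 0 (depending on t) such that c ε^{−1/2} ≤ I(ε) ≤ C ε^{−1/2} for all ε ∈ (0, ε₀]. In particular I(ε) → ∞ as ε → 0, which shows that the frozen Gaussian approximation applied to the low-frequency Gaussian initial datum u₀ = (e^{−|x|²/2}, 0, 0)ᵀ for the 2D constant-coefficient acoustic system produces an approximant whose L² norm blows up like ε^{−1/4}, while the true solution has L² norm of order 1; hence the frozen Gaussian approximation fails for initial data that are not asymptotically high frequency. -/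

import Mathlib

open MeasureTheory Filter Real Set

/-- The integral `I(ε)` from the counterexample: the squared phase-space `L²` norm of the
leading-order frozen Gaussian amplitude applied to the FBI transform of the Gaussian datum
reduces (up to bounded factors) to this quantity. -/
noncomputable def Ifun (t : ℝ) (ε : ℝ) : ℝ :=
  (1/ε) * ∫ p : ℝ × ℝ,
    ‖(1 - Complex.I * (t:ℂ) / (2 * (Real.sqrt (p.1^2 + p.2^2) : ℂ)))‖ *
      (p.1^4 / (4 * (p.1^2 + p.2^2)^2)) *
      Real.exp (-(p.1^2 + p.2^2) / (ε * (1+ε)))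


noncomputable def gfun (t ε r : ℝ) : ℝ :=
  ‖((r : ℂ) - Complex.I * (t:ℂ) / 2)‖ * Real.exp (-r^2 / (ε * (1+ε)))

noncomputable def Gfun (t ε r : ℝ) : ℝ :=
  ‖(((Real.sqrt ε * r : ℝ) : ℂ) - Complex.I * (t:ℂ) / 2)‖ * Real.exp (-r^2 / (1+ε))

noncomputable def Jfun (t ε : ℝ) : ℝ := ∫ r in Set.Ioi (0:ℝ), Gfun t ε r

lemma cos4_0 : ∫ θ in (0:ℝ)..(2*π), Real.cos θ^4 = 3*π/4 := by
  have h := integral_cos_pow (a := 0) (b := 2*π) (n := 2)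
  norm_num [Real.sin_two_pi, Real.cos_two_pi] at h
  rw [h]; ring

lemma cos4_pi : ∫ θ in (-π:ℝ)..π, Real.cos θ^4 = 3*π/4 := by
  have h := integral_cos_pow (a := -π) (b := π) (n := 2)
  norm_num [Real.sin_pi, Real.cos_pi] at h
  rw [h]; ring

lemma inner_integral (t ε r : ℝ) :
    (∫ θ in (0:ℝ)..(2*Real.pi),
      ‖(((Real.sqrt ε * r : ℝ) : ℂ) - Complex.I * (t:ℂ) / 2)‖ *
        (Real.cos θ^4 / 4) * Real.exp (-r^2 / (1+ε))) = (3*π/16) * Gfun t ε r := by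
  have : ∀ θ : ℝ,
      ‖(((Real.sqrt ε * r : ℝ) : ℂ) - Complex.I * (t:ℂ) / 2)‖ *
        (Real.cos θ^4 / 4) * Real.exp (-r^2 / (1+ε))
      = (Gfun t ε r / 4) * Real.cos θ^4 := by
    intro θ; unfold Gfun; ring
  simp only [this]
  rw [intervalIntegral.integral_const_mul, cos4_0]
  ring

lemma sqrt_change (t ε : ℝ) (hε : 0 < ε) :
    (∫ r in Set.Ioi (0:ℝ), gfun t ε r) = Real.sqrt ε * Jfun t ε := by
  have hs : (0:ℝ) < Real.sqrt ε := Real.sqrt_pos.mpr hε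
  have h := integral_comp_mul_left_Ioi (gfun t ε) 0 hs
  rw [mul_zero] at h
  have heq : ∀ r : ℝ, gfun t ε (Real.sqrt ε * r) = Gfun t ε r := by
    intro r
    unfold gfun Gfun
    congr 1
    congr 1
    rw [mul_pow, Real.sq_sqrt hε.le]
    field_simp
  simp only [heq] at h
  unfold Jfun
  rw [smul_eq_mul] at h
  rw [h]
  field_simp

lemma polar_eq (t ε : ℝ) (hε : 0 < ε) :
    (∫ p : ℝ × ℝ,
      ‖(1 - Complex.I * (t:ℂ) / (2 * (Real.sqrt (p.1^2 + p.2^2) : ℂ)))‖ *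
        (p.1^4 / (4 * (p.1^2 + p.2^2)^2)) *
        Real.exp (-(p.1^2 + p.2^2) / (ε * (1+ε))))
    = (3*π/16) * (Real.sqrt ε * Jfun t ε) := by
  rw [← integral_comp_polarCoord_symm]
  have hset : polarCoord.target = Set.Ioi (0:ℝ) ×ˢ Set.Ioo (-π) π := rfl
  have hcong : ∀ p ∈ polarCoord.target,
      p.1 • (‖(1 - Complex.I * (t:ℂ) / (2 * (Real.sqrt ((polarCoord.symm p).1^2 + (polarCoord.symm p).2^2) : ℂ)))‖ *
        ((polarCoord.symm p).1^4 / (4 * ((polarCoord.symm p).1^2 + (polarCoord.symm p).2^2)^2)) *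
        Real.exp (-((polarCoord.symm p).1^2 + (polarCoord.symm p).2^2) / (ε * (1+ε))))
      = gfun t ε p.1 * (Real.cos p.2^4 / 4) := by
    rintro ⟨r, θ⟩ hp
    rw [hset] at hp
    have hr : 0 < r := hp.1
    have hr0 : r ≠ 0 := hr.ne'
    simp only [polarCoord_symm_apply]
    have hsq : (r * Real.cos θ)^2 + (r * Real.sin θ)^2 = r^2 := by
      have := Real.sin_sq_add_cos_sq θ; nlinarith
    rw [hsq, Real.sqrt_sq hr.le]
    have hrc : (r:ℂ) ≠ 0 := by exact_mod_cast hr0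
    have habs : ‖((r:ℂ) - Complex.I * (t:ℂ) / 2)‖
        = r * ‖(1 - Complex.I * (t:ℂ) / (2 * (r:ℂ)))‖ := by
      have h1 : (r:ℂ) * (1 - Complex.I * (t:ℂ) / (2 * (r:ℂ))) = (r:ℂ) - Complex.I * (t:ℂ) / 2 := by
        field_simp
      rw [← h1, norm_mul, Complex.norm_real, Real.norm_eq_abs, abs_of_pos hr]
    unfold gfun
    rw [habs, smul_eq_mul]
    field_simp
  rw [setIntegral_congr_fun (polarCoord.open_target.measurableSet) hcong]
  rw [hset]
  have hprod : (∫ x in Set.Ioi (0:ℝ) ×ˢ Set.Ioo (-π) π, gfun t ε x.1 * (Real.cos x.2^4 / 4))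
      = (∫ r in Set.Ioi (0:ℝ), gfun t ε r) * ∫ θ in Set.Ioo (-π) π, (Real.cos θ^4 / 4) := by
    rw [Measure.volume_eq_prod]
    exact setIntegral_prod_mul (L := ℝ) (gfun t ε) (fun θ => Real.cos θ^4 / 4) _ _
  rw [hprod, sqrt_change t ε hε]
  have : (∫ θ in Set.Ioo (-π) π, Real.cos θ^4 / 4) = 3*π/16 := by
    rw [← MeasureTheory.integral_Ioc_eq_integral_Ioo,
      ← intervalIntegral.integral_of_le (by linarith [Real.pi_pos] : (-π:ℝ) ≤ π)]
    have : ∀ θ:ℝ, Real.cos θ^4/4 = (1/4) * Real.cos θ^4 := fun θ => by ring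
    simp only [this]
    rw [intervalIntegral.integral_const_mul, cos4_pi]; ring
  rw [this]; ring

lemma Ifun_eq (t : ℝ) {ε : ℝ} (hε : 0 < ε) :
    Ifun t ε = ε ^ (-(1:ℝ)/2) * ((3*π/16) * Jfun t ε) := by
  unfold Ifun
  rw [polar_eq t ε hε]
  have h1 : ε ^ (-(1:ℝ)/2) = (Real.sqrt ε)⁻¹ := by
    rw [show (-(1:ℝ)/2) = -(1/2) by ring, Real.rpow_neg hε.le, Real.sqrt_eq_rpow]
  rw [h1]
  have h2 : Real.sqrt ε * Real.sqrt ε = ε := Real.mul_self_sqrt hε.le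
  have hs : (0:ℝ) < Real.sqrt ε := Real.sqrt_pos.mpr hε
  have key : (1:ℝ)/ε * Real.sqrt ε = (Real.sqrt ε)⁻¹ := by
    rw [inv_eq_one_div, div_mul_eq_mul_div, one_mul, div_eq_div_iff hε.ne' hs.ne', one_mul]
    exact h2
  linear_combination (3*π/16 * Jfun t ε) * key

lemma rpow_neg_half {ε : ℝ} (hε : 0 < ε) : ε ^ (-(1:ℝ)/2) = (Real.sqrt ε)⁻¹ := by
  rw [show (-(1:ℝ)/2) = -(1/2) by ring, Real.rpow_neg hε.le, Real.sqrt_eq_rpow]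

noncomputable def Lb (t r : ℝ) : ℝ := t/2 * Real.exp (-1 * r^2)
noncomputable def Ub (t r : ℝ) : ℝ := (r + t/2) * Real.exp (-(1/2) * r^2)

lemma Lb_int (t : ℝ) : Integrable (Lb t) := (integrable_exp_neg_mul_sq one_pos).const_mul _

lemma Ub_int (t : ℝ) : Integrable (Ub t) := by
  have h1 : Integrable (fun r : ℝ => r * Real.exp (-(1/2) * r^2)) :=
    integrable_mul_exp_neg_mul_sq (by norm_num)
  have h2 : Integrable (fun r : ℝ => t/2 * Real.exp (-(1/2) * r^2)) :=
    (integrable_exp_neg_mul_sq (by norm_num)).const_mul _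
  have := h1.add h2
  apply this.congr
  filter_upwards with r
  simp only [Pi.add_apply]
  unfold Ub; ring

lemma abs_It2 (t : ℝ) (ht : 0 < t) : ‖(Complex.I * (t:ℂ) / 2)‖ = t/2 := by
  simp [abs_of_pos ht]

lemma Gfun_nonneg (t ε r : ℝ) : 0 ≤ Gfun t ε r := by
  unfold Gfun; positivity

lemma Gfun_le_Ub (t : ℝ) (ht : 0 < t) {ε r : ℝ} (hε : ε ∈ Set.Ioc (0:ℝ) 1) (hr : r ∈ Set.Ioi (0:ℝ)) :
    Gfun t ε r ≤ Ub t r := by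
  have hr' : (0:ℝ) < r := hr
  have h1 : ‖(((Real.sqrt ε * r : ℝ) : ℂ) - Complex.I * (t:ℂ) / 2)‖
      ≤ r + t/2 := by
    calc ‖(((Real.sqrt ε * r : ℝ) : ℂ) - Complex.I * (t:ℂ) / 2)‖
        ≤ ‖(((Real.sqrt ε * r : ℝ) : ℂ))‖ + ‖(Complex.I * (t:ℂ) / 2)‖ := by
          have hnorm := norm_sub_le (((Real.sqrt ε * r : ℝ) : ℂ)) (Complex.I * (t:ℂ) / 2)
          simpa using hnorm
      _ ≤ r + t/2 := by
          rw [abs_It2 t ht, Complex.norm_real, Real.norm_eq_abs, abs_of_nonneg (by positivity)]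
          have : Real.sqrt ε ≤ 1 := by
            rw [show (1:ℝ) = Real.sqrt 1 by simp]
            exact Real.sqrt_le_sqrt hε.2
          nlinarith
  have h2 : Real.exp (-r^2 / (1+ε)) ≤ Real.exp (-(1/2) * r^2) := by
    apply Real.exp_le_exp.mpr
    have : r^2 / 2 ≤ r^2 / (1+ε) := by
      apply div_le_div_of_nonneg_left (sq_nonneg r) (by linarith [hε.1]) (by linarith [hε.2])
    have h3 : -r^2/(1+ε) = -(r^2/(1+ε)) := by ring
    rw [h3]; linarith
  unfold Ub Gfun
  exact mul_le_mul h1 h2 (Real.exp_nonneg _) (by positivity)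

lemma Lb_le_Gfun (t : ℝ) (ht : 0 < t) {ε r : ℝ} (hε : ε ∈ Set.Ioc (0:ℝ) 1) :
    Lb t r ≤ Gfun t ε r := by
  have him : (((Real.sqrt ε * r : ℝ) : ℂ) - Complex.I * (t:ℂ) / 2).im = -(t/2) := by
    simp [Complex.sub_im, Complex.div_im, Complex.mul_im, Complex.ofReal_im, Complex.ofReal_re]
  have h1 : t/2 ≤ ‖(((Real.sqrt ε * r : ℝ) : ℂ) - Complex.I * (t:ℂ) / 2)‖ := by
    have := Complex.abs_im_le_norm (((Real.sqrt ε * r : ℝ) : ℂ) - Complex.I * (t:ℂ) / 2)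
    rw [him] at this
    rw [abs_neg, abs_of_pos (by positivity)] at this
    exact this
  have h2 : Real.exp (-1 * r^2) ≤ Real.exp (-r^2 / (1+ε)) := by
    apply Real.exp_le_exp.mpr
    have : r^2/(1+ε) ≤ r^2 := div_le_self (sq_nonneg r) (by linarith [hε.1])
    have h3 : -r^2/(1+ε) = -(r^2/(1+ε)) := by ring
    rw [h3]; linarith
  unfold Lb Gfun
  exact mul_le_mul h1 h2 (Real.exp_nonneg _) (by positivity)

lemma Gfun_integrableOn (t : ℝ) (ht : 0 < t) {ε : ℝ} (hε : ε ∈ Set.Ioc (0:ℝ) 1) :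
    IntegrableOn (Gfun t ε) (Set.Ioi (0:ℝ)) := by
  have hm : AEStronglyMeasurable (Gfun t ε) (volume.restrict (Set.Ioi (0:ℝ))) := by
    apply Continuous.aestronglyMeasurable
    unfold Gfun
    exact (continuous_norm.comp (by fun_prop)).mul (by fun_prop)
  apply Integrable.mono ((Ub_int t).integrableOn) hm
  rw [ae_restrict_iff' measurableSet_Ioi]
  filter_upwards with r hr
  rw [Real.norm_eq_abs, Real.norm_eq_abs, abs_of_nonneg (Gfun_nonneg t ε r)]
  have hub : 0 ≤ Ub t r := by
    unfold Ub; have : (0:ℝ) < r := hr; positivity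
  rw [abs_of_nonneg hub]
  exact Gfun_le_Ub t ht hε hr

lemma Lb_integral (t : ℝ) : ∫ r in Set.Ioi (0:ℝ), Lb t r = t/2 * (Real.sqrt π / 2) := by
  unfold Lb
  rw [MeasureTheory.integral_const_mul]
  rw [integral_gaussian_Ioi 1]
  norm_num

lemma Jfun_lower (t : ℝ) (ht : 0 < t) {ε : ℝ} (hε : ε ∈ Set.Ioc (0:ℝ) 1) :
    t/2 * (Real.sqrt π / 2) ≤ Jfun t ε := by
  rw [← Lb_integral t]
  exact setIntegral_mono_on ((Lb_int t).integrableOn) (Gfun_integrableOn t ht hε)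
    measurableSet_Ioi (fun r _ => Lb_le_Gfun t ht hε)

lemma Jfun_upper (t : ℝ) (ht : 0 < t) {ε : ℝ} (hε : ε ∈ Set.Ioc (0:ℝ) 1) :
    Jfun t ε ≤ ∫ r in Set.Ioi (0:ℝ), Ub t r :=
  setIntegral_mono_on (Gfun_integrableOn t ht hε) ((Ub_int t).integrableOn)
    measurableSet_Ioi (fun r hr => Gfun_le_Ub t ht hε hr)

lemma Ub_integral_pos (t : ℝ) (ht : 0 < t) : 0 < ∫ r in Set.Ioi (0:ℝ), Ub t r := by
  have h1 : (0:ℝ) < t/2 * (Real.sqrt π / 2) := by positivity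
  have h2 : t/2 * (Real.sqrt π / 2) ≤ ∫ r in Set.Ioi (0:ℝ), Ub t r := by
    rw [← Lb_integral t]
    apply setIntegral_mono_on ((Lb_int t).integrableOn) ((Ub_int t).integrableOn)
      measurableSet_Ioi
    intro r hr
    have hr' : (0:ℝ) < r := hr
    unfold Lb Ub
    have he : Real.exp (-1 * r^2) ≤ Real.exp (-(1/2) * r^2) := by
      apply Real.exp_le_exp.mpr; nlinarith
    nlinarith [Real.exp_nonneg (-(1/2) * r^2), Real.exp_nonneg (-1 * r^2)]
  linarith

/-- As `ε → 0⁺`, `I(ε)` has the polar-coordinate representation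
`I(ε) = ε^{−1/2} ∫₀^∞∫₀^{2π} |√ε r − it/2| (cos⁴θ/4) e^{−r²/(1+ε)} dθ dr`,
is comparable to `ε^{−1/2}`, and blows up; this shows the frozen Gaussian approximation
fails for the low-frequency Gaussian datum of the 2D acoustic system. -/
theorem Ifun_blowup (t : ℝ) (ht : 0 < t) :
    (∀ ε : ℝ, 0 < ε →
      Ifun t ε = ε ^ (-(1:ℝ)/2) *
        ∫ r in Set.Ioi (0:ℝ), ∫ θ in (0:ℝ)..(2*Real.pi),
          ‖(((Real.sqrt ε * r : ℝ) : ℂ) - Complex.I * (t:ℂ) / 2)‖ *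
            (Real.cos θ^4 / 4) * Real.exp (-r^2 / (1+ε))) ∧
    (∃ c C ε₀ : ℝ, 0 < c ∧ 0 < C ∧ 0 < ε₀ ∧
      ∀ ε ∈ Set.Ioc (0:ℝ) ε₀,
        c * ε ^ (-(1:ℝ)/2) ≤ Ifun t ε ∧ Ifun t ε ≤ C * ε ^ (-(1:ℝ)/2)) ∧
    Tendsto (Ifun t) (nhdsWithin 0 (Set.Ioi 0)) atTop := by
  set c : ℝ := (3*π/16) * (t/2 * (Real.sqrt π / 2)) with hc_def
  set C : ℝ := (3*π/16) * ∫ r in Set.Ioi (0:ℝ), Ub t r with hC_def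
  have hc : 0 < c := by
    have := Real.pi_pos
    have := Real.sqrt_pos.mpr Real.pi_pos
    positivity
  have hC : 0 < C := by
    have := Real.pi_pos
    have := Ub_integral_pos t ht
    positivity
  have hbd : ∀ ε ∈ Set.Ioc (0:ℝ) 1,
      c * ε ^ (-(1:ℝ)/2) ≤ Ifun t ε ∧ Ifun t ε ≤ C * ε ^ (-(1:ℝ)/2) := by
    intro ε hε
    have hX : (0:ℝ) < ε ^ (-(1:ℝ)/2) := Real.rpow_pos_of_pos hε.1 _
    have hJl := Jfun_lower t ht hε
    have hJu := Jfun_upper t ht hε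
    rw [Ifun_eq t hε.1]
    have hπ := Real.pi_pos
    constructor
    · rw [mul_comm (ε ^ (-(1:ℝ)/2)) _]
      apply mul_le_mul_of_nonneg_right _ hX.le
      rw [hc_def]
      exact mul_le_mul_of_nonneg_left hJl (by positivity)
    · rw [mul_comm C _]
      apply mul_le_mul_of_nonneg_left _ hX.le
      rw [hC_def]
      exact mul_le_mul_of_nonneg_left hJu (by positivity)
  refine ⟨?_, ⟨c, C, 1, hc, hC, one_pos, hbd⟩, ?_⟩
  · intro ε hε
    rw [Ifun_eq t hε]
    congr 1
    have hin : ∀ r : ℝ, (∫ θ in (0:ℝ)..(2*Real.pi),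
        ‖(((Real.sqrt ε * r : ℝ) : ℂ) - Complex.I * (t:ℂ) / 2)‖ *
          (Real.cos θ^4 / 4) * Real.exp (-r^2 / (1+ε))) = (3*π/16) * Gfun t ε r :=
      inner_integral t ε
    simp only [hin]
    rw [MeasureTheory.integral_const_mul]
    rfl
  · have hmono : Tendsto (fun ε : ℝ => c * ε ^ (-(1:ℝ)/2)) (nhdsWithin 0 (Set.Ioi 0)) atTop := by
      apply Tendsto.const_mul_atTop hc
      have hsq : Tendsto Real.sqrt (nhdsWithin 0 (Set.Ioi 0)) (nhdsWithin 0 (Set.Ioi 0)) := by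
        apply tendsto_nhdsWithin_of_tendsto_nhds_of_eventually_within
        · have h0 : Tendsto Real.sqrt (nhds 0) (nhds 0) := by
            simpa using Real.continuous_sqrt.tendsto 0
          exact h0.mono_left nhdsWithin_le_nhds
        · filter_upwards [self_mem_nhdsWithin] with x hx
          exact Real.sqrt_pos.mpr hx
      have hinv : Tendsto (fun ε : ℝ => (Real.sqrt ε)⁻¹) (nhdsWithin 0 (Set.Ioi 0)) atTop :=
        tendsto_inv_nhdsGT_zero.comp hsq
      apply hinv.congr'
      filter_upwards [self_mem_nhdsWithin] with ε hε
      exact (rpow_neg_half hε).symm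
    apply tendsto_atTop_mono' _ _ hmono
    filter_upwards [Ioc_mem_nhdsGT one_pos] with ε hε
    exact (hbd ε hε).1
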